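/- Let Δ be a k×k Hermitian positive semidefinite complex matrix and D ∈ ℂ^k such that Δ − D D† is positive semidefinite, and let c > 0 and p ≥ 0 be reals. Then ε := c − p c² D† (p c Δ + I)^{-1} D is a positive real number and ε^{-1} = c^{-1} + p · D† (p c (Δ − D D†) + I)^{-1} D. -/

import Mathlib

open Matrix ComplexOrder

private lemma smul_posSemidef {k : ℕ} {M : Matrix (Fin k) (Fin k) ℂ} (hM : M.PosSemidef)
    {r : ℝ} (hr : 0 ≤ r) : ((r : ℂ) • M).PosSemidef := by
  refine Matrix.PosSemidef.of_dotProduct_mulVec_nonneg ?_ ?_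
  · show _ᴴ = _
    rw [conjTranspose_smul, hM.isHermitian.eq, Complex.star_def, Complex.conj_ofReal]
  · intro x
    rw [smul_mulVec, dotProduct_smul, smul_eq_mul]
    exact mul_nonneg (Complex.zero_le_real.mpr hr) (hM.dotProduct_mulVec_nonneg x)

/-- Let `Δ` be a `k × k` Hermitian positive semidefinite complex matrix and `D ∈ ℂ^k` with
`Δ − D D†` positive semidefinite, and let `c > 0`, `p ≥ 0` be reals.  Then
`ε := c − p c² D† (p c Δ + I)⁻¹ D` is a positive real and
`ε⁻¹ = c⁻¹ + p · D† (p c (Δ − D D†) + I)⁻¹ D`. -/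
theorem estimation_error_inverse_formula (k : ℕ) (Δ : Matrix (Fin k) (Fin k) ℂ)
    (hΔ : Δ.PosSemidef) (D : Fin k → ℂ) (hΔD : (Δ - Matrix.vecMulVec D (star D)).PosSemidef)
    (c p : ℝ) (hc : 0 < c) (hp : 0 ≤ p) :
    ∃ ε : ℝ, 0 < ε ∧
      (ε : ℂ) = (c : ℂ) - (p : ℂ) * (c : ℂ) ^ 2 *
          (star D ⬝ᵥ (((p * c : ℝ) : ℂ) • Δ + 1)⁻¹ *ᵥ D) ∧
      ((ε⁻¹ : ℝ) : ℂ) = (c⁻¹ : ℝ) + (p : ℂ) *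
          (star D ⬝ᵥ (((p * c : ℝ) : ℂ) • (Δ - Matrix.vecMulVec D (star D)) + 1)⁻¹ *ᵥ D) := by
  set a : ℝ := p * c with ha
  have ha0 : 0 ≤ a := mul_nonneg hp hc.le
  set A : Matrix (Fin k) (Fin k) ℂ := (a : ℂ) • Δ + 1 with hAdef
  set B : Matrix (Fin k) (Fin k) ℂ := (a : ℂ) • (Δ - Matrix.vecMulVec D (star D)) + 1 with hBdef
  have hA : A.PosDef := Matrix.PosDef.posSemidef_add (smul_posSemidef hΔ ha0) Matrix.PosDef.one
  have hB : B.PosDef := Matrix.PosDef.posSemidef_add (smul_posSemidef hΔD ha0) Matrix.PosDef.one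
  have hAdet : IsUnit A.det := hA.det_pos.ne'.isUnit
  have hBdet : IsUnit B.det := hB.det_pos.ne'.isUnit
  set u : Fin k → ℂ := A⁻¹ *ᵥ D with hu
  set s : ℂ := star D ⬝ᵥ u with hs
  have hAu : A *ᵥ u = D := by
    rw [hu, mulVec_mulVec, Matrix.mul_nonsing_inv _ hAdet, one_mulVec]
  -- vecMulVec action
  have hvv : Matrix.vecMulVec D (star D) *ᵥ u = s • D := by
    funext i
    simp only [mulVec, vecMulVec_apply, dotProduct, Pi.smul_apply, smul_eq_mul, hs]
    rw [Finset.sum_congr rfl (fun j _ => mul_assoc _ _ _), ← Finset.mul_sum]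
    ring
  have hBA : B = A - (a : ℂ) • Matrix.vecMulVec D (star D) := by
    rw [hBdef, hAdef, smul_sub]; abel
  have hBu : B *ᵥ u = (1 - (a : ℂ) * s) • D := by
    rw [hBA, sub_mulVec, hAu, smul_mulVec, hvv, smul_smul, sub_smul, one_smul]
  -- s is a nonnegative real
  have hs0 : 0 ≤ s := hA.inv.posSemidef.dotProduct_mulVec_nonneg D
  obtain ⟨hsre, hsim⟩ := Complex.nonneg_iff.mp hs0
  have hsval : s = (s.re : ℂ) := Complex.ext (by simp) (by simp [← hsim])
  -- star u ⬝ᵥ D = s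
  have hstar : star u ⬝ᵥ D = s := by
    have : star u ⬝ᵥ D = star (star D ⬝ᵥ u) := by
      simp [dotProduct, Finset.sum_comm, mul_comm]
    rw [this, ← hs, hsval]
    simp [Complex.conj_ofReal]
  -- key positivity: 1 - a * s.re > 0
  have hkey : 0 < 1 - a * s.re := by
    rcases eq_or_ne D 0 with hD | hD
    · have h0 : s = 0 := by simp [hs, hu, hD]
      have : s.re = 0 := by rw [h0]; simp
      simp [this]
    · have hu0 : u ≠ 0 := by
        intro h
        rw [h, mulVec_zero] at hAu
        exact hD hAu.symm
      have hspos : 0 < s := hA.inv.dotProduct_mulVec_pos hD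
      have hsrepos : 0 < s.re := (Complex.pos_iff.mp hspos).1
      have hq : 0 < star u ⬝ᵥ B *ᵥ u := hB.dotProduct_mulVec_pos hu0
      rw [hBu, dotProduct_smul, smul_eq_mul, hstar, hsval] at hq
      have : (0:ℂ) < (((1 - a * s.re) * s.re : ℝ) : ℂ) := by
        convert hq using 1
        push_cast
        ring
      have hr : 0 < (1 - a * s.re) * s.re := Complex.zero_lt_real.mp this
      nlinarith
  -- the inverse relation: s = (1 - a s) * t
  set t : ℂ := star D ⬝ᵥ B⁻¹ *ᵥ D with ht
  have hut : u = (1 - (a : ℂ) * s) • (B⁻¹ *ᵥ D) := by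
    have := congrArg (fun v => B⁻¹ *ᵥ v) hBu
    simpa [mulVec_mulVec, Matrix.nonsing_inv_mul _ hBdet, mulVec_smul] using this
  have hst : s = (1 - (a : ℂ) * s) * t := by
    conv_lhs => rw [hs, hut, dotProduct_smul, smul_eq_mul]
  -- wrap up
  refine ⟨c * (1 - a * s.re), by positivity, ?_, ?_⟩
  · have hcast : (↑(c * (1 - a * s.re)) : ℂ) = ↑c - ↑p * ↑c ^ 2 * (↑s.re : ℂ) := by
      rw [ha]; push_cast; ring
    rw [hcast, ← hsval]
  · have hne : (1 : ℂ) - (a : ℂ) * s ≠ 0 := by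
      rw [hsval]
      intro h
      apply hkey.ne'
      have := congrArg Complex.re h
      simpa using this
    have htval : t = (s.re : ℂ) / (1 - (a : ℂ) * (s.re : ℂ)) := by
      rw [← hsval, eq_div_iff hne]
      linear_combination -hst
    have h1 : (1 : ℝ) - a * s.re ≠ 0 := hkey.ne'
    have h1' : (1 : ℝ) - p * c * s.re ≠ 0 := by rwa [ha] at h1
    have hreal : (c * (1 - a * s.re))⁻¹ = c⁻¹ + p * (s.re / (1 - a * s.re)) := by
      rw [ha]
      field_simp
      have h1'' : (1 : ℝ) - c * p * s.re ≠ 0 := by rwa [mul_comm c p]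
      field_simp
      ring
    rw [htval, hreal]
    push_cast
    ring
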